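/- arXiv:1609.05998 — 8 statements merged into one kernel-verified Lean document; each statement's English description precedes it below -/
import Mathlib

section
/- If μ is a probability measure on ℝ^d with finite second moment, then μ is a probabilistic frame (i.e., there exist 0 < A ≤ B < ∞ with A‖x‖² ≤ ∫⟨x,y⟩² dμ(y) ≤ B‖x‖² for all x) if and only if the linear span of the support of μ is all of ℝ^d. -/
open MeasureTheory
open scoped RealInnerProductSpace

/-- The support of a measure: points all of whose open neighborhoods have positive measure. -/
def measureSupport {E : Type*} [TopologicalSpace E] [MeasurableSpace E]
    (μ : MeasureTheory.Measure E) : Set E :=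
  {x | ∀ U : Set E, IsOpen U → x ∈ U → 0 < μ U}

section Aux

variable {d : ℕ}

lemma compl_measureSupport_null (μ : Measure (EuclideanSpace ℝ (Fin d))) :
    μ (measureSupport μ)ᶜ = 0 := by
  set S : Set (Set (EuclideanSpace ℝ (Fin d))) := {U | IsOpen U ∧ μ U = 0}
  have hcompl : (measureSupport μ)ᶜ = ⋃₀ S := by
    ext y
    simp only [measureSupport, Set.mem_compl_iff, Set.mem_setOf_eq, not_forall, Set.mem_sUnion]
    constructor
    · rintro ⟨U, hU, hyU, hpos⟩
      exact ⟨U, ⟨hU, by simpa using hpos⟩, hyU⟩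
    · rintro ⟨U, ⟨hU, h0⟩, hyU⟩
      exact ⟨U, hU, hyU, by simp [h0]⟩
  obtain ⟨T, hTc, hTS, hT⟩ := TopologicalSpace.isOpen_sUnion_countable S (fun s hs => hs.1)
  rw [hcompl, ← hT]
  exact (measure_sUnion_null_iff hTc).2 fun s hs => (hTS hs).2

lemma inner_sq_bound (x y : EuclideanSpace ℝ (Fin d)) :
    ⟪x, y⟫ ^ 2 ≤ ‖x‖ ^ 2 * ‖y‖ ^ 2 := by
  have h := abs_real_inner_le_norm x y
  nlinarith [abs_nonneg ⟪x, y⟫, sq_abs ⟪x, y⟫]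

lemma integrable_inner_sq (μ : Measure (EuclideanSpace ℝ (Fin d)))
    (h2 : Integrable (fun x : EuclideanSpace ℝ (Fin d) => ‖x‖ ^ 2) μ)
    (x : EuclideanSpace ℝ (Fin d)) :
    Integrable (fun y => ⟪x, y⟫ ^ 2) μ := by
  apply Integrable.mono' (h2.const_mul (‖x‖ ^ 2))
  · exact ((continuous_const.inner continuous_id).pow 2).aestronglyMeasurable
  · filter_upwards with y
    rw [Real.norm_eq_abs, abs_of_nonneg (sq_nonneg _)]
    exact inner_sq_bound x y

/-- If the inner product with x vanishes a.e., it vanishes on the support. -/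
lemma inner_eq_zero_on_support (μ : Measure (EuclideanSpace ℝ (Fin d)))
    {x : EuclideanSpace ℝ (Fin d)} (h : ∀ᵐ y ∂μ, ⟪x, y⟫ = 0) :
    ∀ y ∈ measureSupport μ, ⟪x, y⟫ = 0 := by
  intro y hy
  by_contra hne
  have hcont : Continuous fun y : EuclideanSpace ℝ (Fin d) => ⟪x, y⟫ :=
    continuous_const.inner continuous_id
  have hU : IsOpen {z : EuclideanSpace ℝ (Fin d) | ⟪x, z⟫ ≠ 0} :=
    isOpen_compl_singleton.preimage hcont
  have hpos := hy _ hU hne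
  have hnull : μ {z : EuclideanSpace ℝ (Fin d) | ⟪x, z⟫ ≠ 0} = 0 := by
    simpa [ae_iff] using h
  rw [hnull] at hpos
  exact lt_irrefl _ hpos

lemma eq_zero_of_inner_support (μ : Measure (EuclideanSpace ℝ (Fin d)))
    (hspan : Submodule.span ℝ (measureSupport μ) = ⊤)
    {x : EuclideanSpace ℝ (Fin d)} (h : ∀ y ∈ measureSupport μ, ⟪x, y⟫ = 0) :
    x = 0 := by
  have hx : ∀ z : EuclideanSpace ℝ (Fin d), ⟪x, z⟫ = 0 := by
    intro z
    have hz : z ∈ Submodule.span ℝ (measureSupport μ) := by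
      rw [hspan]; exact Submodule.mem_top
    induction hz using Submodule.span_induction with
    | mem y hy => exact h y hy
    | zero => simp
    | add a b _ _ ha hb => rw [inner_add_right, ha, hb]; ring
    | smul c a _ ha => rw [real_inner_smul_right, ha]; ring
  exact inner_self_eq_zero.1 (hx x)

end Aux

/-- A probability measure on ℝ^d with finite second moment is a probabilistic frame
(there exist frame bounds 0 < A ≤ B < ∞) iff the linear span of its support is all of ℝ^d. -/
theorem stmt0 {d : ℕ} (μ : Measure (EuclideanSpace ℝ (Fin d)))
    [IsProbabilityMeasure μ]
    (h2 : Integrable (fun x : EuclideanSpace ℝ (Fin d) => ‖x‖ ^ 2) μ) :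
    (∃ A B : ℝ, 0 < A ∧ A ≤ B ∧
      ∀ x : EuclideanSpace ℝ (Fin d),
        A * ‖x‖ ^ 2 ≤ (∫ y, ⟪x, y⟫ ^ 2 ∂μ) ∧ (∫ y, ⟪x, y⟫ ^ 2 ∂μ) ≤ B * ‖x‖ ^ 2) ↔
    Submodule.span ℝ (measureSupport μ) = ⊤ := by
  constructor
  · rintro ⟨A, B, hA, hAB, hfr⟩
    by_contra hspan
    have hne : (Submodule.span ℝ (measureSupport μ))ᗮ ≠ ⊥ := by
      intro hbot
      exact hspan (Submodule.orthogonal_eq_bot_iff.1 hbot)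
    obtain ⟨x, hxK, hx0⟩ := Submodule.exists_mem_ne_zero_of_ne_bot hne
    have hinner : ∀ y ∈ measureSupport μ, ⟪x, y⟫ = 0 := fun y hy => by
      rw [real_inner_comm]
      exact hxK y (Submodule.subset_span hy)
    have hae : ∀ᵐ y ∂μ, y ∈ measureSupport μ :=
      mem_ae_iff.mpr (by simpa using compl_measureSupport_null μ)
    have hint : (∫ y, ⟪x, y⟫ ^ 2 ∂μ) = 0 := by
      rw [integral_congr_ae (g := fun _ => (0 : ℝ)) ?_, integral_zero]
      filter_upwards [hae] with y hy
      rw [hinner y hy]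
      ring
    have h1 := (hfr x).1
    rw [hint] at h1
    have hxp : 0 < ‖x‖ := norm_pos_iff.2 hx0
    have hxn : 0 < ‖x‖ ^ 2 := by positivity
    nlinarith
  · intro hspan
    set g : EuclideanSpace ℝ (Fin d) → ℝ := fun x => ∫ y, ⟪x, y⟫ ^ 2 ∂μ with hg_def
    set B : ℝ := ∫ y : EuclideanSpace ℝ (Fin d), ‖y‖ ^ 2 ∂μ with hB_def
    have hupper : ∀ x : EuclideanSpace ℝ (Fin d), g x ≤ B * ‖x‖ ^ 2 := by
      intro x
      have : g x ≤ ∫ y : EuclideanSpace ℝ (Fin d), ‖x‖ ^ 2 * ‖y‖ ^ 2 ∂μ := by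
        exact integral_mono (integrable_inner_sq μ h2 x) (h2.const_mul _)
          fun y => inner_sq_bound x y
      rwa [integral_const_mul, mul_comm] at this
    have hg0 : ∀ x : EuclideanSpace ℝ (Fin d), x = 0 → g x = 0 := by
      intro x hx
      simp [hg_def, hx]
    by_cases hsub : ∀ x : EuclideanSpace ℝ (Fin d), x = 0
    · refine ⟨1, 1, one_pos, le_refl _, fun x => ?_⟩
      rw [hsub x]
      simp
    · push_neg at hsub
      obtain ⟨v, hv⟩ := hsub
      have hu : (‖v‖⁻¹ • v : EuclideanSpace ℝ (Fin d)) ∈ Metric.sphere (0 : EuclideanSpace ℝ (Fin d)) 1 := by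
        rw [mem_sphere_zero_iff_norm, norm_smul, norm_inv, norm_norm]
        exact inv_mul_cancel₀ (norm_ne_zero_iff.2 hv)
      -- continuity of g
      have hgcont : Continuous g := by
        rw [continuous_iff_continuousAt]
        intro x₀
        apply continuousAt_of_dominated (bound := fun y => (‖x₀‖ + 1) ^ 2 * ‖y‖ ^ 2)
        · filter_upwards with x
          exact ((continuous_const.inner continuous_id).pow 2).aestronglyMeasurable
        · have hnb : ∀ᶠ x in nhds x₀, x ∈ Metric.closedBall x₀ 1 :=
            Metric.closedBall_mem_nhds x₀ one_pos
          filter_upwards [hnb] with x hx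
          filter_upwards with y
          have hxle : ‖x‖ ≤ ‖x₀‖ + 1 := by
            have h1 : ‖x - x₀‖ ≤ 1 := by
              rw [← dist_eq_norm]; exact Metric.mem_closedBall.1 hx
            calc ‖x‖ = ‖x₀ + (x - x₀)‖ := by congr 1; abel
              _ ≤ ‖x₀‖ + ‖x - x₀‖ := norm_add_le _ _
              _ ≤ ‖x₀‖ + 1 := by linarith
          rw [Real.norm_eq_abs, abs_of_nonneg (sq_nonneg _)]
          calc ⟪x, y⟫ ^ 2 ≤ ‖x‖ ^ 2 * ‖y‖ ^ 2 := inner_sq_bound x y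
            _ ≤ (‖x₀‖ + 1) ^ 2 * ‖y‖ ^ 2 :=
                mul_le_mul_of_nonneg_right
                  (pow_le_pow_left₀ (norm_nonneg _) hxle 2) (sq_nonneg _)
        · exact h2.const_mul _
        · filter_upwards with y
          exact ((continuous_id.inner continuous_const).pow 2).continuousAt
      obtain ⟨x₀, hx₀s, hmin⟩ := (isCompact_sphere (0 : EuclideanSpace ℝ (Fin d)) 1).exists_isMinOn
        ⟨_, hu⟩ hgcont.continuousOn
      have hx₀n : ‖x₀‖ = 1 := mem_sphere_zero_iff_norm.1 hx₀s
      set A : ℝ := g x₀ with hA_def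
      have hAnn : 0 ≤ A := integral_nonneg fun y => sq_nonneg _
      have hApos : 0 < A := by
        rcases hAnn.lt_or_eq with h | h
        · exact h
        · exfalso
          have hzero : ∀ᵐ y ∂μ, ⟪x₀, y⟫ ^ 2 = 0 := by
            have hz : (fun y => ⟪x₀, y⟫ ^ 2) =ᵐ[μ] 0 :=
              (integral_eq_zero_iff_of_nonneg (fun y => sq_nonneg _)
                (integrable_inner_sq μ h2 x₀)).1 h.symm
            filter_upwards [hz] with y hy
            exact hy
          have hzero' : ∀ᵐ y ∂μ, ⟪x₀, y⟫ = 0 := by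
            filter_upwards [hzero] with y hy
            exact pow_eq_zero_iff (two_ne_zero)|>.1 hy
          have hx₀0 : x₀ = 0 :=
            eq_zero_of_inner_support μ hspan (inner_eq_zero_on_support μ hzero')
          rw [hx₀0] at hx₀n
          simp at hx₀n
      have hAB : A ≤ B := by
        have := hupper x₀
        rw [hx₀n] at this
        simpa using this
      refine ⟨A, B, hApos, hAB, fun x => ?_⟩
      constructor
      · show A * ‖x‖ ^ 2 ≤ g x
        by_cases hx : x = 0
        · rw [hx, hg0 0 rfl]; simp
        · have hxn : ‖x‖ ≠ 0 := norm_ne_zero_iff.2 hx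
          have hux : (‖x‖⁻¹ • x : EuclideanSpace ℝ (Fin d)) ∈
              Metric.sphere (0 : EuclideanSpace ℝ (Fin d)) 1 := by
            rw [mem_sphere_zero_iff_norm, norm_smul, norm_inv, norm_norm]
            field_simp
          have hscale : g x = ‖x‖ ^ 2 * g (‖x‖⁻¹ • x) := by
            rw [hg_def]
            simp only
            rw [← integral_const_mul]
            apply integral_congr_ae
            filter_upwards with y
            rw [real_inner_smul_left]
            field_simp
          have hmin' := hmin hux
          calc A * ‖x‖ ^ 2 ≤ g (‖x‖⁻¹ • x) * ‖x‖ ^ 2 := by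
                apply mul_le_mul_of_nonneg_right hmin' (sq_nonneg _)
            _ = g x := by rw [hscale]; ring
      · show g x ≤ B * ‖x‖ ^ 2
        exact hupper x
end

section
/- If μₙ is a sequence in PF(A,B,ℝ^d) converging weakly in the 2-Wasserstein sense to μ ∈ P₂(ℝ^d) (weak convergence of measures together with convergence of second moments), then μ ∈ PF(A,B,ℝ^d). Hence PF(A,B,ℝ^d) is closed in the Wasserstein space. -/
open MeasureTheory Filter
open scoped RealInnerProductSpace BoundedContinuousFunction

/-- μ ∈ PF(A,B,ℝ^d): a probability measure with frame bounds A, B. -/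
def memPF {d : ℕ} (A B : ℝ) (μ : Measure (EuclideanSpace ℝ (Fin d))) : Prop :=
  IsProbabilityMeasure μ ∧
    ∀ x : EuclideanSpace ℝ (Fin d),
      A * ‖x‖ ^ 2 ≤ (∫ y, ⟪x, y⟫ ^ 2 ∂μ) ∧ (∫ y, ⟪x, y⟫ ^ 2 ∂μ) ≤ B * ‖x‖ ^ 2

lemma aux_tendsto {d : ℕ} (μn : ℕ → Measure (EuclideanSpace ℝ (Fin d)))
    (μ : Measure (EuclideanSpace ℝ (Fin d))) [IsProbabilityMeasure μ]
    (hpn : ∀ n, IsProbabilityMeasure (μn n))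
    (hμ2 : Integrable (fun y : EuclideanSpace ℝ (Fin d) => ‖y‖ ^ 2) μ)
    (hn2 : ∀ n, Integrable (fun y : EuclideanSpace ℝ (Fin d) => ‖y‖ ^ 2) (μn n))
    (hweak : ∀ f : EuclideanSpace ℝ (Fin d) →ᵇ ℝ,
      Tendsto (fun n => ∫ x, f x ∂(μn n)) atTop (nhds (∫ x, f x ∂μ)))
    (hmom : Tendsto (fun n => ∫ x, ‖x‖ ^ 2 ∂(μn n)) atTop (nhds (∫ x, ‖x‖ ^ 2 ∂μ)))
    (f : EuclideanSpace ℝ (Fin d) → ℝ) (hf : Continuous f) (hf0 : ∀ y, 0 ≤ f y)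
    (C : ℝ) (hC : 0 ≤ C) (hfC : ∀ y, f y ≤ C * ‖y‖ ^ 2) :
    Tendsto (fun n => ∫ y, f y ∂(μn n)) atTop (nhds (∫ y, f y ∂μ)) := by
  have hgc : Continuous fun y : EuclideanSpace ℝ (Fin d) => ‖y‖ ^ 2 :=
    continuous_norm.pow 2
  -- integrability of f
  have hfint : ∀ (ν : Measure (EuclideanSpace ℝ (Fin d))), Integrable (fun y => ‖y‖ ^ 2) ν →
      Integrable f ν := by
    intro ν hg
    refine (hg.const_mul C).mono' hf.aestronglyMeasurable (ae_of_all _ fun y => ?_)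
    rw [Real.norm_eq_abs, abs_of_nonneg (hf0 y)]
    exact hfC y
  rw [Metric.tendsto_atTop]
  intro ε hε
  -- truncation of the second moment
  have hmono : Tendsto (fun R : ℕ => ∫ y, min (‖y‖ ^ 2) (R : ℝ) ∂μ) atTop
      (nhds (∫ y, ‖y‖ ^ 2 ∂μ)) := by
    refine tendsto_integral_of_dominated_convergence (fun y => ‖y‖ ^ 2)
      (fun R => (hgc.min continuous_const).aestronglyMeasurable) hμ2
      (fun R => ae_of_all _ fun y => ?_) (ae_of_all _ fun y => ?_)
    · rw [Real.norm_eq_abs, abs_of_nonneg (le_min (sq_nonneg _) (Nat.cast_nonneg R))]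
      exact min_le_left _ _
    · refine Tendsto.congr' ?_ tendsto_const_nhds
      filter_upwards [tendsto_natCast_atTop_atTop.eventually_ge_atTop (‖y‖ ^ 2)] with R hR
      exact (min_eq_left hR).symm
  have h0 : Tendsto (fun R : ℕ => C * ((∫ y, ‖y‖ ^ 2 ∂μ) - ∫ y, min (‖y‖ ^ 2) (R : ℝ) ∂μ))
      atTop (nhds 0) := by
    have h := ((tendsto_const_nhds (x := ∫ y, ‖y‖ ^ 2 ∂μ) (f := atTop)).sub hmono).const_mul C
    rw [sub_self, mul_zero] at h
    exact h
  obtain ⟨R, hR⟩ := (h0.eventually (eventually_lt_nhds (by positivity : (0:ℝ) < ε / 4))).exists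
  -- bounded continuous truncations
  set fB : EuclideanSpace ℝ (Fin d) →ᵇ ℝ :=
    BoundedContinuousFunction.ofNormedAddCommGroup (fun y => min (f y) (C * R))
      (hf.min continuous_const) (C * R) (fun y => by
        rw [Real.norm_eq_abs, abs_of_nonneg (le_min (hf0 y) (by positivity))]
        exact min_le_right _ _) with hfB
  set gB : EuclideanSpace ℝ (Fin d) →ᵇ ℝ :=
    BoundedContinuousFunction.ofNormedAddCommGroup (fun y => min (‖y‖ ^ 2) (R : ℝ))
      (hgc.min continuous_const) R (fun y => by
        rw [Real.norm_eq_abs, abs_of_nonneg (le_min (sq_nonneg _) (Nat.cast_nonneg R))]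
        exact min_le_right _ _) with hgB
  have hfBcoe : ∀ y, fB y = min (f y) (C * R) := fun y => rfl
  have hgBcoe : ∀ y, gB y = min (‖y‖ ^ 2) (R : ℝ) := fun y => rfl
  -- pointwise truncation error bound
  have hpt : ∀ y : EuclideanSpace ℝ (Fin d),
      f y - fB y ≤ C * (‖y‖ ^ 2 - gB y) := by
    intro y
    rw [hfBcoe, hgBcoe]
    rcases le_total (f y) (C * R) with h1 | h1 <;>
      rcases le_total (‖y‖ ^ 2) (R : ℝ) with h2 | h2 <;>
      simp [min_eq_left, min_eq_right, h1, h2] <;>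
      nlinarith [hfC y, hf0 y, sq_nonneg (‖y‖)]
  -- per-measure truncation error estimate
  have key : ∀ (ν : Measure (EuclideanSpace ℝ (Fin d))) [IsProbabilityMeasure ν],
      Integrable (fun y => ‖y‖ ^ 2) ν →
      0 ≤ (∫ y, f y ∂ν) - (∫ y, fB y ∂ν) ∧
      (∫ y, f y ∂ν) - (∫ y, fB y ∂ν) ≤ C * ((∫ y, ‖y‖ ^ 2 ∂ν) - ∫ y, gB y ∂ν) := by
    intro ν _ hg
    have hfi := hfint ν hg
    have hfBi := fB.integrable ν
    have hgBi := gB.integrable ν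
    constructor
    · have := integral_mono hfBi hfi (fun y => by rw [hfBcoe]; exact min_le_left _ _)
      linarith
    · have h1 : (∫ y, f y ∂ν) - (∫ y, fB y ∂ν) = ∫ y, (f y - fB y) ∂ν :=
        (integral_sub hfi hfBi).symm
      have h2 : (∫ y, (f y - fB y) ∂ν) ≤ ∫ y, C * (‖y‖ ^ 2 - gB y) ∂ν :=
        integral_mono (hfi.sub hfBi) ((hg.sub hgBi).const_mul C) hpt
      have h3 : (∫ y, C * (‖y‖ ^ 2 - gB y) ∂ν)
          = C * ((∫ y, ‖y‖ ^ 2 ∂ν) - ∫ y, gB y ∂ν) := by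
        rw [show (fun y : EuclideanSpace ℝ (Fin d) => C * (‖y‖ ^ 2 - gB y))
            = fun y => C • (‖y‖ ^ 2 - gB y) from rfl, integral_smul, smul_eq_mul,
          integral_sub hg hgBi]
      linarith
  have hRμ : C * ((∫ y, ‖y‖ ^ 2 ∂μ) - ∫ y, gB y ∂μ) < ε / 4 := by
    have : (∫ y, gB y ∂μ) = ∫ y, min (‖y‖ ^ 2) (R : ℝ) ∂μ := rfl
    rw [this]; exact hR
  -- eventual estimates
  have hev1 : ∀ᶠ n in atTop, |(∫ y, fB y ∂(μn n)) - ∫ y, fB y ∂μ| < ε / 4 := by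
    have := hweak fB
    rw [Metric.tendsto_atTop] at this
    obtain ⟨N, hN⟩ := this (ε / 4) (by positivity)
    exact eventually_atTop.2 ⟨N, fun n hn => by simpa [Real.dist_eq] using hN n hn⟩
  have hev2 : ∀ᶠ n in atTop,
      C * ((∫ y, ‖y‖ ^ 2 ∂(μn n)) - ∫ y, gB y ∂(μn n)) < ε / 2 := by
    have ht : Tendsto (fun n => C * ((∫ y, ‖y‖ ^ 2 ∂(μn n)) - ∫ y, gB y ∂(μn n))) atTop
        (nhds (C * ((∫ y, ‖y‖ ^ 2 ∂μ) - ∫ y, gB y ∂μ))) :=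
      (hmom.sub (hweak gB)).const_mul C
    exact ht.eventually (eventually_lt_nhds (by linarith))
  obtain ⟨N, hN⟩ := eventually_atTop.1 (hev1.and hev2)
  refine ⟨N, fun n hn => ?_⟩
  obtain ⟨h1, h2⟩ := hN n hn
  haveI := hpn n
  obtain ⟨hDn0, hDn⟩ := key (μn n) (hn2 n)
  obtain ⟨hD0, hD⟩ := key μ hμ2
  rw [Real.dist_eq, abs_sub_lt_iff]
  rw [abs_sub_lt_iff] at h1
  constructor <;> linarith

/-- PF(A,B,ℝ^d) is closed under Wasserstein convergence (weak convergence together with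
convergence of second moments): a limit in P₂(ℝ^d) of a sequence in PF(A,B,ℝ^d) is again
in PF(A,B,ℝ^d). -/
theorem stmt2 {d : ℕ} (A B : ℝ) (hA : 0 < A) (hAB : A ≤ B)
    (μn : ℕ → Measure (EuclideanSpace ℝ (Fin d))) (μ : Measure (EuclideanSpace ℝ (Fin d)))
    [IsProbabilityMeasure μ]
    (hμ2 : Integrable (fun x : EuclideanSpace ℝ (Fin d) => ‖x‖ ^ 2) μ)
    (hn : ∀ n, memPF A B (μn n))
    (hn2 : ∀ n, Integrable (fun x : EuclideanSpace ℝ (Fin d) => ‖x‖ ^ 2) (μn n))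
    (hweak : ∀ f : EuclideanSpace ℝ (Fin d) →ᵇ ℝ,
      Tendsto (fun n => ∫ x, f x ∂(μn n)) atTop (nhds (∫ x, f x ∂μ)))
    (hmom : Tendsto (fun n => ∫ x, ‖x‖ ^ 2 ∂(μn n)) atTop (nhds (∫ x, ‖x‖ ^ 2 ∂μ))) :
    memPF A B μ := by
  refine ⟨inferInstance, fun x => ?_⟩
  have hcont : Continuous fun y : EuclideanSpace ℝ (Fin d) => ⟪x, y⟫ ^ 2 :=
    (continuous_const.inner continuous_id).pow 2
  have hbd : ∀ y : EuclideanSpace ℝ (Fin d), ⟪x, y⟫ ^ 2 ≤ ‖x‖ ^ 2 * ‖y‖ ^ 2 := fun y => by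
    nlinarith [abs_real_inner_le_norm x y, sq_abs (⟪x, y⟫), abs_nonneg (⟪x, y⟫),
      norm_nonneg x, norm_nonneg y]
  have ht := aux_tendsto μn μ (fun n => (hn n).1) hμ2 hn2 hweak hmom
    (fun y => ⟪x, y⟫ ^ 2) hcont (fun y => sq_nonneg _) (‖x‖ ^ 2) (sq_nonneg _) hbd
  constructor
  · exact ge_of_tendsto ht (Eventually.of_forall fun n => ((hn n).2 x).1)
  · exact le_of_tendsto ht (Eventually.of_forall fun n => ((hn n).2 x).2)
end

section
/- Let μ be a probabilistic frame for ℝ^d with frame operator S_μ and let h : ℝ^d → ℝ^d be square-integrable with respect to μ. Define ψ_h(x) = S_μ^{-1} x + h(x) − ∫ ⟨S_μ^{-1}x, y⟩ h(y) dμ(y). Then the pushforward (ψ_h)_# μ is a transport dual of μ, witnessed by the coupling γ = (id, ψ_h)_# μ, i.e., ∬ x y^T dγ(x,y) = I. -/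
open MeasureTheory
open scoped RealInnerProductSpace

lemma coord_abs_le_norm {d : ℕ} (x : EuclideanSpace ℝ (Fin d)) (i : Fin d) : |x i| ≤ ‖x‖ := by
  rw [EuclideanSpace.norm_eq]
  calc |x i| = Real.sqrt (‖x i‖ ^ 2) := by
        rw [Real.sqrt_sq (norm_nonneg _), Real.norm_eq_abs]
    _ ≤ _ := Real.sqrt_le_sqrt
        (Finset.single_le_sum (f := fun k => ‖x k‖ ^ 2) (fun k _ => sq_nonneg _)
          (Finset.mem_univ i))

/-- For a probabilistic frame `μ` and `h ∈ L²(μ)`, the pushforward of `μ` by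
`ψ_h(x) = S_μ⁻¹x + h(x) − ∫ ⟨S_μ⁻¹x, y⟩ h(y) dμ(y)` is a transport dual of `μ`,
witnessed by the coupling `γ = (id, ψ_h)_# μ`. -/
theorem stmt4 {d : ℕ} (μ : Measure (EuclideanSpace ℝ (Fin d))) [IsProbabilityMeasure μ]
    (h2 : Integrable (fun x : EuclideanSpace ℝ (Fin d) => ‖x‖ ^ 2) μ)
    (hframe : ∃ A B : ℝ, 0 < A ∧ A ≤ B ∧
      ∀ x : EuclideanSpace ℝ (Fin d),
        A * ‖x‖ ^ 2 ≤ (∫ y, ⟪x, y⟫ ^ 2 ∂μ) ∧ (∫ y, ⟪x, y⟫ ^ 2 ∂μ) ≤ B * ‖x‖ ^ 2)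
    (S : Matrix (Fin d) (Fin d) ℝ) (hS : S = fun i j => ∫ x, x i * x j ∂μ)
    (h : EuclideanSpace ℝ (Fin d) → EuclideanSpace ℝ (Fin d))
    (hmeas : AEStronglyMeasurable h μ)
    (hL2 : Integrable (fun x => ‖h x‖ ^ 2) μ)
    (ψ : EuclideanSpace ℝ (Fin d) → EuclideanSpace ℝ (Fin d))
    (hψ : ψ = fun x => Matrix.toEuclideanLin S⁻¹ x + h x -
      ∫ y, (⟪Matrix.toEuclideanLin S⁻¹ x, y⟫) • h y ∂μ)
    (γ : Measure (EuclideanSpace ℝ (Fin d) × EuclideanSpace ℝ (Fin d)))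
    (hγ : γ = μ.map (fun x => (x, ψ x))) :
    γ.map Prod.fst = μ ∧
    γ.map Prod.snd = μ.map ψ ∧
    ∀ i j : Fin d, (∫ p : EuclideanSpace ℝ (Fin d) × EuclideanSpace ℝ (Fin d),
      p.1 i * p.2 j ∂γ) = (1 : Matrix (Fin d) (Fin d) ℝ) i j := by
  have proj_cont : ∀ k : Fin d, Continuous fun y : EuclideanSpace ℝ (Fin d) => y k :=
    fun k => (EuclideanSpace.proj (𝕜 := ℝ) k).continuous
  -- basic integrability facts
  have int_xy : ∀ k l : Fin d,
      Integrable (fun y : EuclideanSpace ℝ (Fin d) => y k * y l) μ := by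
    intro k l
    refine h2.mono ((proj_cont k).mul (proj_cont l)).aestronglyMeasurable ?_
    filter_upwards with y
    have hk := coord_abs_le_norm y k
    have hl := coord_abs_le_norm y l
    have h0 := norm_nonneg y
    rw [Real.norm_eq_abs, Real.norm_eq_abs, abs_mul, abs_of_nonneg (sq_nonneg ‖y‖), pow_two]
    exact mul_le_mul hk hl (abs_nonneg _) h0
  have int_xh : ∀ k l : Fin d,
      Integrable (fun y : EuclideanSpace ℝ (Fin d) => y k * h y l) μ := by
    intro k l
    refine (h2.add hL2).mono
      ((proj_cont k).aestronglyMeasurable.mul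
        ((proj_cont l).comp_aestronglyMeasurable hmeas)) ?_
    filter_upwards with y
    have hk := coord_abs_le_norm y k
    have hl := coord_abs_le_norm (h y) l
    have h0 := norm_nonneg y
    have h1 := norm_nonneg (h y)
    simp only [Pi.add_apply, Real.norm_eq_abs, abs_mul]
    have hb : |y k| * |h y l| ≤ ‖y‖ ^ 2 + ‖h y‖ ^ 2 := by
      nlinarith [abs_nonneg (y k), abs_nonneg (h y l), sq_nonneg (‖y‖ - ‖h y‖)]
    calc |y k| * |h y l| ≤ ‖y‖ ^ 2 + ‖h y‖ ^ 2 := hb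
      _ ≤ |‖y‖ ^ 2 + ‖h y‖ ^ 2| := le_abs_self _
  have int_yh_smul : ∀ k : Fin d,
      Integrable (fun y : EuclideanSpace ℝ (Fin d) => y k • h y) μ := by
    intro k
    refine (h2.add hL2).mono ((proj_cont k).aestronglyMeasurable.smul hmeas) ?_
    filter_upwards with y
    have hk := coord_abs_le_norm y k
    have h0 := norm_nonneg y
    have h1 := norm_nonneg (h y)
    rw [norm_smul, Real.norm_eq_abs (y k)]
    simp only [Pi.add_apply, Real.norm_eq_abs]
    have hb : |y k| * ‖h y‖ ≤ ‖y‖ ^ 2 + ‖h y‖ ^ 2 := by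
      nlinarith [abs_nonneg (y k), sq_nonneg (‖y‖ - ‖h y‖)]
    calc |y k| * ‖h y‖ ≤ ‖y‖ ^ 2 + ‖h y‖ ^ 2 := hb
      _ ≤ |‖y‖ ^ 2 + ‖h y‖ ^ 2| := le_abs_self _
  -- the vector moments
  set m : Fin d → EuclideanSpace ℝ (Fin d) := fun k => ∫ y, y k • h y ∂μ with hm
  -- the correction term is a finite linear combination
  have hIeq : ∀ x : EuclideanSpace ℝ (Fin d),
      (∫ y, (⟪Matrix.toEuclideanLin S⁻¹ x, y⟫) • h y ∂μ)
      = ∑ k, (Matrix.toEuclideanLin S⁻¹ x) k • m k := by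
    intro x
    set w : EuclideanSpace ℝ (Fin d) := Matrix.toEuclideanLin S⁻¹ x with hw
    have hpt : ∀ y : EuclideanSpace ℝ (Fin d),
        (⟪w, y⟫ : ℝ) • h y = ∑ k, w k • (y k • h y) := by
      intro y
      have hin : (⟪w, y⟫ : ℝ) = ∑ k, w k * y k := by
        simp [PiLp.inner_apply, RCLike.inner_apply, conj_trivial]
        exact Finset.sum_congr rfl fun _ _ => mul_comm _ _
      rw [hin, Finset.sum_smul]
      exact Finset.sum_congr rfl fun k _ => (mul_smul _ _ _)
    simp only [hpt]
    calc ∫ y, (∑ k, w k • (y k • h y)) ∂μ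
        = ∑ k, ∫ y, w k • (y k • h y) ∂μ :=
          integral_finset_sum _ (fun k _ =>
            ((int_yh_smul k).smul (w k) :
              Integrable (fun y : EuclideanSpace ℝ (Fin d) => w k • (y k • h y)) μ))
      _ = ∑ k, w k • m k := Finset.sum_congr rfl fun k _ => integral_smul _ _
  -- measurability of ψ
  have hA_cont : Continuous fun x : EuclideanSpace ℝ (Fin d) => Matrix.toEuclideanLin S⁻¹ x :=
    LinearMap.continuous_of_finiteDimensional _
  have hψmeas : AEStronglyMeasurable ψ μ := by
    have hψ' : ψ = fun x =>
        (Matrix.toEuclideanLin S⁻¹ x - ∑ k, (Matrix.toEuclideanLin S⁻¹ x) k • m k) + h x := by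
      funext x
      simp only [hψ]
      rw [hIeq x]
      abel
    rw [hψ']
    refine (Continuous.aestronglyMeasurable ?_).add hmeas
    refine hA_cont.sub (continuous_finset_sum _ fun k _ => ?_)
    exact ((proj_cont k).comp hA_cont).smul continuous_const
  have hfmeas : AEMeasurable (fun x : EuclideanSpace ℝ (Fin d) => (x, ψ x)) μ :=
    aemeasurable_id.prodMk hψmeas.aemeasurable
  -- matrix facts
  have hSint : ∀ a b : Fin d, ∫ x, x a * x b ∂μ = S a b := by
    intro a b; rw [hS]
  have hSsymm : ∀ a b : Fin d, S a b = S b a := by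
    intro a b
    rw [← hSint a b, ← hSint b a]
    congr 1
    funext x
    exact mul_comm _ _
  have hpd : S.PosDef := by
    refine Matrix.PosDef.of_dotProduct_mulVec_pos ?_ ?_
    · show S.conjTranspose = S
      ext a b
      simp only [Matrix.conjTranspose_apply, star_trivial]
      exact hSsymm b a
    · intro x hx
      obtain ⟨A, B, hA, hAB, hbounds⟩ := hframe
      set v : EuclideanSpace ℝ (Fin d) := (WithLp.equiv 2 (Fin d → ℝ)).symm x with hv
      have hvne : v ≠ 0 := by
        intro h0; apply hx; have := congrArg WithLp.ofLp h0; simpa [hv] using this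
      have hint_inner : ∀ a : Fin d,
          Integrable (fun y : EuclideanSpace ℝ (Fin d) =>
            ∑ b, (x a * x b) * (y a * y b)) μ :=
        fun a => integrable_finset_sum _ fun b _ => (int_xy a b).const_mul _
      have h1 : dotProduct (star x) (S.mulVec x) = ∫ y, (⟪v, y⟫ : ℝ) ^ 2 ∂μ := by
        have expand : ∀ y : EuclideanSpace ℝ (Fin d),
            (⟪v, y⟫ : ℝ) ^ 2 = ∑ a, ∑ b, (x a * x b) * (y a * y b) := by
          intro y
          have hvy : (⟪v, y⟫ : ℝ) = ∑ a, x a * y a := by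
            simp [PiLp.inner_apply, RCLike.inner_apply, conj_trivial, hv]
            exact Finset.sum_congr rfl fun _ _ => mul_comm _ _
          rw [hvy, sq, Finset.sum_mul_sum]
          exact Finset.sum_congr rfl fun a _ => Finset.sum_congr rfl fun b _ => by ring
        simp only [expand]
        rw [integral_finset_sum _ fun a _ => hint_inner a]
        have hinner : ∀ a : Fin d,
            ∫ y, (∑ b, (x a * x b) * (y a * y b)) ∂μ = ∑ b, (x a * x b) * S a b := by
          intro a
          rw [integral_finset_sum _ fun b _ => (int_xy a b).const_mul _]
          exact Finset.sum_congr rfl fun b _ => by rw [integral_const_mul, hSint a b]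
        simp only [hinner]
        simp only [dotProduct, Matrix.mulVec, Pi.star_apply, star_trivial,
          Finset.mul_sum]
        exact Finset.sum_congr rfl fun a _ => Finset.sum_congr rfl fun b _ => by ring
      rw [h1]
      have hv2 : (0 : ℝ) < A * ‖v‖ ^ 2 := by
        have : 0 < ‖v‖ := norm_pos_iff.mpr hvne
        positivity
      exact lt_of_lt_of_le hv2 (hbounds v).1
  have hdet : IsUnit S.det := hpd.det_pos.ne'.isUnit
  have hmul1 : S * S⁻¹ = 1 := Matrix.mul_nonsing_inv S hdet
  have hmul2 : S⁻¹ * S = 1 := Matrix.nonsing_inv_mul S hdet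
  have hinvsymm : ∀ a b : Fin d, S⁻¹ a b = S⁻¹ b a := by
    intro a b
    have hT : S.transpose = S := by
      ext a b; exact hSsymm b a
    calc S⁻¹ a b = (S⁻¹).transpose b a := (Matrix.transpose_apply _ _ _).symm
      _ = (S.transpose)⁻¹ b a := by rw [Matrix.transpose_nonsing_inv]
      _ = S⁻¹ b a := by rw [hT]
  refine ⟨?_, ?_, ?_⟩
  · rw [hγ, AEMeasurable.map_map_of_aemeasurable measurable_fst.aemeasurable hfmeas]
    have hcomp : (Prod.fst ∘ fun x : EuclideanSpace ℝ (Fin d) => (x, ψ x)) = id := rfl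
    rw [hcomp, Measure.map_id]
  · rw [hγ, AEMeasurable.map_map_of_aemeasurable measurable_snd.aemeasurable hfmeas]
    rfl
  · intro i j
    have hcont : Continuous fun p : EuclideanSpace ℝ (Fin d) × EuclideanSpace ℝ (Fin d) =>
        p.1 i * p.2 j :=
      ((proj_cont i).comp continuous_fst).mul ((proj_cont j).comp continuous_snd)
    rw [hγ, integral_map hfmeas hcont.aestronglyMeasurable]
    -- now compute ∫ x, x i * ψ x j
    set c : Fin d → ℝ := fun k => ∫ y, y k * h y j ∂μ with hc
    have hmkj : ∀ k : Fin d, (m k) j = c k := by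
      intro k
      have hmk := (EuclideanSpace.proj (𝕜 := ℝ) j).integral_comp_comm (int_yh_smul k)
      calc (m k) j = (EuclideanSpace.proj (𝕜 := ℝ) j) (m k) := rfl
        _ = ∫ y, (EuclideanSpace.proj (𝕜 := ℝ) j) ((y k • h y :
              EuclideanSpace ℝ (Fin d))) ∂μ := hmk.symm
        _ = ∫ y, y k * h y j ∂μ := by
              congr 1
        _ = c k := by simp only [hc]
    have hAcomp : ∀ (x : EuclideanSpace ℝ (Fin d)) (k : Fin d),
        (Matrix.toEuclideanLin S⁻¹ x) k = ∑ l, S⁻¹ k l * x l := fun x k => rfl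
    have key : (fun x : EuclideanSpace ℝ (Fin d) => x i * ψ x j) = fun x =>
        ((∑ k, S⁻¹ j k * (x i * x k)) + x i * h x j)
          - ∑ k, c k * ∑ l, S⁻¹ k l * (x i * x l) := by
      funext x
      have h1 : ψ x = Matrix.toEuclideanLin S⁻¹ x + h x
          - ∑ k, (Matrix.toEuclideanLin S⁻¹ x) k • m k := by
        simp only [hψ]
        rw [hIeq x]
      rw [h1]
      simp only [PiLp.sub_apply, PiLp.add_apply]
      have hsum : (∑ k, (Matrix.toEuclideanLin S⁻¹ x) k • m k) j
          = ∑ k, (Matrix.toEuclideanLin S⁻¹ x) k * (m k) j := by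
        calc (∑ k, (Matrix.toEuclideanLin S⁻¹ x) k • m k) j
            = (EuclideanSpace.proj (𝕜 := ℝ) j)
                (∑ k, (Matrix.toEuclideanLin S⁻¹ x) k • m k) := rfl
          _ = ∑ k, (EuclideanSpace.proj (𝕜 := ℝ) j)
                ((Matrix.toEuclideanLin S⁻¹ x) k • m k) := map_sum _ _ _
          _ = ∑ k, (Matrix.toEuclideanLin S⁻¹ x) k * (m k) j := by
              refine Finset.sum_congr rfl fun k _ => ?_
              rw [_root_.map_smul]
              rfl
      rw [hsum]
      simp only [hAcomp, hmkj]
      rw [mul_sub, mul_add]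
      congr 1
      · congr 1
        rw [Finset.mul_sum]
        exact Finset.sum_congr rfl fun k _ => by ring
      · rw [Finset.mul_sum]
        refine Finset.sum_congr rfl fun k _ => ?_
        rw [Finset.sum_mul, Finset.mul_sum, Finset.mul_sum]
        exact Finset.sum_congr rfl fun l _ => by ring
    rw [key]
    have intG1 : Integrable (fun x : EuclideanSpace ℝ (Fin d) =>
        ∑ k, S⁻¹ j k * (x i * x k)) μ :=
      integrable_finset_sum _ fun k _ => (int_xy i k).const_mul _
    have intG3 : Integrable (fun x : EuclideanSpace ℝ (Fin d) =>
        ∑ k, c k * ∑ l, S⁻¹ k l * (x i * x l)) μ :=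
      integrable_finset_sum _ fun k _ =>
        (integrable_finset_sum _ fun l _ => (int_xy i l).const_mul _).const_mul _
    have intG12 : Integrable (fun x : EuclideanSpace ℝ (Fin d) =>
        (∑ k, S⁻¹ j k * (x i * x k)) + x i * h x j) μ := intG1.add (int_xh i j)
    rw [integral_sub intG12 intG3, integral_add intG1 (int_xh i j)]
    have E1 : ∫ x, (∑ k, S⁻¹ j k * (x i * x k)) ∂μ = (1 : Matrix (Fin d) (Fin d) ℝ) i j := by
      rw [integral_finset_sum _ fun k _ => (int_xy i k).const_mul _]
      have hterm : ∀ k : Fin d, ∫ x, S⁻¹ j k * (x i * x k) ∂μ = S i k * S⁻¹ k j := by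
        intro k
        rw [integral_const_mul, hSint i k, hinvsymm j k]
        ring
      simp only [hterm]
      rw [← Matrix.mul_apply, hmul1]
    have E3 : ∫ x, (∑ k, c k * ∑ l, S⁻¹ k l * (x i * x l)) ∂μ = c i := by
      rw [integral_finset_sum (f := fun k (x : EuclideanSpace ℝ (Fin d)) =>
          c k * ∑ l, S⁻¹ k l * (x i * x l)) _ fun k _ =>
        (integrable_finset_sum _ fun l _ => (int_xy i l).const_mul _).const_mul _]
      have h3 : ∀ k : Fin d, ∫ x, c k * (∑ l, S⁻¹ k l * (x i * x l)) ∂μ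
          = c k * (1 : Matrix (Fin d) (Fin d) ℝ) k i := by
        intro k
        rw [integral_const_mul, integral_finset_sum _ fun l _ => (int_xy i l).const_mul _]
        congr 1
        have hterm : ∀ l : Fin d, ∫ x, S⁻¹ k l * (x i * x l) ∂μ = S⁻¹ k l * S l i := by
          intro l
          rw [integral_const_mul, hSint i l, hSsymm i l]
        simp only [hterm]
        rw [← Matrix.mul_apply, hmul2]
      simp only [h3]
      simp [Matrix.one_apply]
    rw [E1, E3]
    have hmid : ∫ x, x i * h x j ∂μ = c i := by simp only [hc]
    rw [hmid]
    ring
end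

section
/- Let Φ, Ψ be the N×d and M×d analysis matrices of frames {φᵢ}ᵢ₌₁^N and {ψⱼ}ⱼ₌₁^M for ℝ^d, and let α ∈ ℝ^N, β ∈ ℝ^M be positive weight vectors summing to 1. There exists a nonnegative matrix A ∈ ℝ^{N×M} with row sums αᵢ, column sums βⱼ, and Φ^T A Ψ = I if and only if there is no triple (B, u, v), B ∈ ℝ^{d×d}, u ∈ ℝ^N, v ∈ ℝ^M, satisfying φᵢ^T B ψⱼ + uᵢ + vⱼ ≥ 0 for all i, j, and trace(B) + u^T α + v^T β < 0. -/
open Matrix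

open Finset
open scoped InnerProductSpace

variable {E : Type*} [NormedAddCommGroup E] [InnerProductSpace ℝ E] [FiniteDimensional ℝ E]

lemma cone_carath_aux {ι : Type*} [Fintype ι] [DecidableEq ι] (w : ι → E) :
    ∀ n : ℕ, ∀ s : Finset ι, s.card ≤ n → ∀ t : ι → ℝ, (∀ i, 0 ≤ t i) → (∀ i ∉ s, t i = 0) →
    ∃ (s' : Finset ι) (c : ι → ℝ), LinearIndependent ℝ (fun i : s' => w i) ∧ (∀ i, 0 ≤ c i) ∧
      (∀ i ∉ s', c i = 0) ∧ ∑ i, c i • w i = ∑ i, t i • w i := by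
  intro n
  induction n with
  | zero =>
    intro s hs t ht hsupp
    rw [Nat.le_zero, Finset.card_eq_zero] at hs
    subst hs
    exact ⟨∅, t, linearIndependent_empty_type, ht, fun i _ => hsupp i (by simp), rfl⟩
  | succ n ih =>
    intro s hs t ht hsupp
    by_cases hLI : LinearIndependent ℝ (fun i : s => w i)
    · exact ⟨s, t, hLI, ht, hsupp, rfl⟩
    · obtain ⟨g, hgsum, i₁, hgi₁⟩ := Fintype.not_linearIndependent_iff.mp hLI
      -- get a version with a positive entry
      obtain ⟨g, hgsum, i₀, hgi₀⟩ :
          ∃ g : s → ℝ, ∑ i, g i • w i = 0 ∧ ∃ i₀ : s, 0 < g i₀ := by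
        rcases lt_or_ge 0 (g i₁) with h | h
        · exact ⟨g, hgsum, i₁, h⟩
        · refine ⟨-g, by simpa using congrArg Neg.neg hgsum, i₁, ?_⟩
          simpa using lt_of_le_of_ne h hgi₁
      set G : ι → ℝ := fun i => if h : i ∈ s then g ⟨i, h⟩ else 0 with hG
      have hGsum : ∑ i, G i • w i = 0 := by
        rw [← Finset.sum_subset (Finset.subset_univ s)
          (by intro i _ hi; simp [hG, hi])]
        rw [← Finset.sum_attach s (fun i => G i • w i)]
        simpa [hG] using hgsum
      have hPne : (i₀ : ι) ∈ s.filter (fun i => 0 < G i) := by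
        simp only [Finset.mem_filter]
        exact ⟨i₀.2, by simpa [hG, i₀.2] using hgi₀⟩
      obtain ⟨im, him, hmin⟩ := Finset.exists_min_image (s.filter (fun i => 0 < G i))
        (fun i => t i / G i) ⟨_, hPne⟩
      have himS : im ∈ s := (Finset.mem_filter.mp him).1
      have hGim : 0 < G im := (Finset.mem_filter.mp him).2
      set lam : ℝ := t im / G im with hlam
      have hlam0 : 0 ≤ lam := div_nonneg (ht im) hGim.le
      set t' : ι → ℝ := fun i => t i - lam * G i with ht'
      have ht'0 : ∀ i, 0 ≤ t' i := by
        intro i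
        by_cases hi : i ∈ s
        · rcases le_or_gt (G i) 0 with h | h
          · have : lam * G i ≤ 0 := mul_nonpos_of_nonneg_of_nonpos hlam0 h
            simp only [ht']; linarith [ht i]
          · have hiP : i ∈ s.filter (fun i => 0 < G i) := Finset.mem_filter.mpr ⟨hi, h⟩
            have := hmin i hiP
            have : lam * G i ≤ t i := by
              rw [hlam]
              calc t im / G im * G i ≤ t i / G i * G i := by
                    exact mul_le_mul_of_nonneg_right (hmin i hiP) h.le
                _ = t i := div_mul_cancel₀ _ h.ne'
            simp only [ht']; linarith
        · simp [ht', hG, hi, ht i]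
      have ht'im : t' im = 0 := by
        simp only [ht', hlam]
        field_simp
        ring
      have hsupp' : ∀ i ∉ s.erase im, t' i = 0 := by
        intro i hi
        rw [Finset.mem_erase] at hi
        push_neg at hi
        by_cases his : i ∈ s
        · have hieq : i = im := by by_contra h; exact hi h his
          rw [hieq]; exact ht'im
        · simp [ht', hG, his, hsupp i his]
      have hcard : (s.erase im).card ≤ n := by
        have := Finset.card_erase_of_mem himS
        omega
      obtain ⟨s', c, hLI', hc0, hcsupp, hcsum⟩ := ih (s.erase im) hcard t' ht'0 hsupp'
      refine ⟨s', c, hLI', hc0, hcsupp, ?_⟩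
      rw [hcsum]
      have : ∑ i, t' i • w i = ∑ i, t i • w i - lam • ∑ i, G i • w i := by
        rw [Finset.smul_sum, ← Finset.sum_sub_distrib]
        congr 1; funext i
        simp [ht', sub_smul, mul_smul]
      rw [this, hGsum, smul_zero, sub_zero]

lemma isClosed_finitely_generated_cone {ι : Type*} [Fintype ι] [DecidableEq ι] (w : ι → E) :
    IsClosed {x : E | ∃ t : ι → ℝ, (∀ i, 0 ≤ t i) ∧ ∑ i, t i • w i = x} := by
  have hset : {x : E | ∃ t : ι → ℝ, (∀ i, 0 ≤ t i) ∧ ∑ i, t i • w i = x} =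
      ⋃ s : Finset ι, {x : E | LinearIndependent ℝ (fun i : s => w i) ∧
        ∃ c : ι → ℝ, (∀ i, 0 ≤ c i) ∧ (∀ i ∉ s, c i = 0) ∧ ∑ i, c i • w i = x} := by
    ext x
    simp only [Set.mem_setOf_eq, Set.mem_iUnion]
    constructor
    · rintro ⟨t, ht, rfl⟩
      obtain ⟨s', c, hLI, hc0, hcsupp, hcsum⟩ := cone_carath_aux w (Finset.univ.card)
        Finset.univ (le_refl _) t ht (by simp)
      exact ⟨s', hLI, c, hc0, hcsupp, hcsum⟩
    · rintro ⟨s, _, c, hc0, _, rfl⟩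
      exact ⟨c, hc0, rfl⟩
  rw [hset]
  apply isClosed_iUnion_of_finite
  intro s
  by_cases hLI : LinearIndependent ℝ (fun i : s => w i)
  · -- the image of the nonnegative orthant under an injective linear map
    let f : (s → ℝ) →ₗ[ℝ] E :=
      { toFun := fun c => ∑ i : s, c i • w i
        map_add' := by intro a b; simp [add_smul, Finset.sum_add_distrib]
        map_smul' := by intro m a; simp [smul_smul, Finset.smul_sum] }
    have hker : LinearMap.ker f = ⊥ := by
      rw [LinearMap.ker_eq_bot']
      intro m hm
      have := Fintype.linearIndependent_iff.mp hLI m hm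
      funext i; exact this i
    have hemb := LinearMap.isClosedEmbedding_of_injective hker
    have himg : {x : E | LinearIndependent ℝ (fun i : s => w i) ∧
        ∃ c : ι → ℝ, (∀ i, 0 ≤ c i) ∧ (∀ i ∉ s, c i = 0) ∧ ∑ i, c i • w i = x} =
        f '' {c : s → ℝ | ∀ i, 0 ≤ c i} := by
      ext x
      simp only [Set.mem_setOf_eq, Set.mem_image]
      constructor
      · rintro ⟨-, c, hc0, hcsupp, rfl⟩
        refine ⟨fun i => c i, fun i => hc0 i, ?_⟩
        show ∑ i : s, c i • w i = ∑ i, c i • w i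
        rw [← Finset.sum_subset (Finset.subset_univ s)
          (by intro i _ hi; simp [hcsupp i hi])]
        exact (Finset.sum_attach s (fun i => c i • w i))
      · rintro ⟨c, hc0, rfl⟩
        refine ⟨hLI, fun i => if h : i ∈ s then c ⟨i, h⟩ else 0,
          fun i => by by_cases h : i ∈ s <;> simp [h, hc0], fun i hi => by simp [hi], ?_⟩
        show _ = ∑ i : s, c i • w i
        rw [← Finset.sum_subset (Finset.subset_univ s)
          (by intro i _ hi; simp [hi])]
        rw [← Finset.sum_attach s (fun i => (if h : i ∈ s then c ⟨i, h⟩ else 0) • w i)]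
        congr 1; funext i; simp [i.2]
    rw [himg]
    apply hemb.isClosedMap
    have : {c : s → ℝ | ∀ i, 0 ≤ c i} = ⋂ i : s, (fun c : s → ℝ => c i) ⁻¹' Set.Ici 0 := by
      ext c; simp [Set.mem_iInter]
    rw [this]
    exact isClosed_iInter fun i => isClosed_Ici.preimage (continuous_apply i)
  · convert isClosed_empty
    ext x; simp only [Set.mem_setOf_eq, Set.mem_empty_iff_false, iff_false]
    rintro ⟨h, -⟩; exact hLI h


lemma farkas_lemma {ι : Type*} [Fintype ι] [DecidableEq ι] (w : ι → E) (b : E) :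
    (∃ t : ι → ℝ, (∀ i, 0 ≤ t i) ∧ ∑ i, t i • w i = b) ↔
    ∀ y : E, (∀ i, 0 ≤ ⟪w i, y⟫_ℝ) → 0 ≤ ⟪b, y⟫_ℝ := by
  constructor
  · rintro ⟨t, ht, rfl⟩ y hy
    rw [sum_inner]
    refine Finset.sum_nonneg fun i _ => ?_
    rw [real_inner_smul_left]
    exact mul_nonneg (ht i) (hy i)
  · intro h
    by_contra hb
    haveI : CompleteSpace E := FiniteDimensional.complete ℝ E
    let K : ConvexCone ℝ E :=
      { carrier := {x : E | ∃ t : ι → ℝ, (∀ i, 0 ≤ t i) ∧ ∑ i, t i • w i = x}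
        smul_mem' := by
          rintro c hc x ⟨t, ht, rfl⟩
          exact ⟨fun i => c * t i, fun i => mul_nonneg hc.le (ht i),
            by simp [mul_smul, Finset.smul_sum]⟩
        add_mem' := by
          rintro x ⟨t, ht, rfl⟩ y ⟨r, hr, rfl⟩
          exact ⟨t + r, fun i => add_nonneg (ht i) (hr i),
            by simp [add_smul, Finset.sum_add_distrib]⟩ }
    have hbK : b ∉ K := hb
    have hne : (K : Set E).Nonempty := ⟨0, 0, fun i => le_refl _, by simp⟩
    have hcl : IsClosed (K : Set E) := isClosed_finitely_generated_cone w
    obtain ⟨y, hy1, hy2⟩ : ∃ y, (∀ x ∈ K, 0 ≤ ⟪x, y⟫_ℝ) ∧ ⟪y, b⟫_ℝ < 0 := by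
      let C : ProperCone ℝ E :=
        { carrier := (K : Set E)
          add_mem' := fun ha hb => K.add_mem ha hb
          zero_mem' := ⟨0, fun _ => le_refl _, by simp⟩
          smul_mem' := by
            rintro c x ⟨t, ht, rfl⟩
            exact ⟨fun i => c * t i, fun i => mul_nonneg c.2 (ht i),
              by simp [mul_smul, Finset.smul_sum, NNReal.smul_def]⟩
          isClosed' := hcl }
      obtain ⟨y, h1, h2⟩ := C.hyperplane_separation' (x₀ := b) (by exact hbK)
      exact ⟨y, h1, by rw [real_inner_comm]; exact h2⟩
    have hwy : ∀ i, 0 ≤ ⟪w i, y⟫_ℝ := by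
      intro i
      refine hy1 (w i) ⟨Pi.single i 1, fun j => ?_, ?_⟩
      · by_cases h : j = i <;> simp [Pi.single_apply, h]
      · simp [Pi.single_apply]
    have := h y hwy
    rw [real_inner_comm] at hy2
    linarith

open Matrix

variable {d N M : ℕ}

/-- Generator vectors for the Farkas system. -/
def farkasW (Φ : Matrix (Fin N) (Fin d) ℝ) (Ψ : Matrix (Fin M) (Fin d) ℝ) :
    Fin N × Fin M → EuclideanSpace ℝ ((Fin d × Fin d) ⊕ (Fin N ⊕ Fin M)) := fun p =>
  WithLp.toLp 2 (Sum.elim (fun kl : Fin d × Fin d => Φ p.1 kl.1 * Ψ p.2 kl.2)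
    (Sum.elim (fun i' => if i' = p.1 then (1 : ℝ) else 0)
      (fun j' => if j' = p.2 then (1 : ℝ) else 0)))

/-- Target vector for the Farkas system. -/
def farkasB (α : Fin N → ℝ) (β : Fin M → ℝ) :
    EuclideanSpace ℝ ((Fin d × Fin d) ⊕ (Fin N ⊕ Fin M)) :=
  WithLp.toLp 2 (Sum.elim (fun kl : Fin d × Fin d => if kl.1 = kl.2 then (1 : ℝ) else 0) (Sum.elim α β))

lemma farkasW_inner (Φ : Matrix (Fin N) (Fin d) ℝ) (Ψ : Matrix (Fin M) (Fin d) ℝ)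
    (p : Fin N × Fin M) (y : EuclideanSpace ℝ ((Fin d × Fin d) ⊕ (Fin N ⊕ Fin M))) :
    ⟪farkasW Φ Ψ p, y⟫_ℝ =
      Φ p.1 ⬝ᵥ (Matrix.of fun k l => y (Sum.inl (k, l))).mulVec (Ψ p.2)
        + y (Sum.inr (Sum.inl p.1)) + y (Sum.inr (Sum.inr p.2)) := by
  simp only [PiLp.inner_apply, RCLike.inner_apply, starRingEnd_apply, star_trivial]
  rw [Fintype.sum_sum_type, Fintype.sum_sum_type]
  have h1 : ∑ kl : Fin d × Fin d, farkasW Φ Ψ p (Sum.inl kl) * y (Sum.inl kl)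
      = Φ p.1 ⬝ᵥ (Matrix.of fun k l => y (Sum.inl (k, l))).mulVec (Ψ p.2) := by
    rw [Fintype.sum_prod_type]
    simp only [dotProduct, Matrix.mulVec, Matrix.of_apply, farkasW, Sum.elim_inl]
    refine Finset.sum_congr rfl fun k _ => ?_
    rw [Finset.mul_sum]
    refine Finset.sum_congr rfl fun l _ => ?_
    ring
  have h2 : ∑ i', farkasW Φ Ψ p (Sum.inr (Sum.inl i')) * y (Sum.inr (Sum.inl i'))
      = y (Sum.inr (Sum.inl p.1)) := by
    simp [farkasW, ite_mul, Finset.sum_ite_eq']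
  have h3 : ∑ j', farkasW Φ Ψ p (Sum.inr (Sum.inr j')) * y (Sum.inr (Sum.inr j'))
      = y (Sum.inr (Sum.inr p.2)) := by
    simp [farkasW, ite_mul, Finset.sum_ite_eq']
  simp only [mul_comm (WithLp.ofLp y _)]
  rw [h1, h2, h3, add_assoc]

lemma farkasB_inner (α : Fin N → ℝ) (β : Fin M → ℝ)
    (y : EuclideanSpace ℝ ((Fin d × Fin d) ⊕ (Fin N ⊕ Fin M))) :
    ⟪farkasB (d := d) α β, y⟫_ℝ =
      (Matrix.of fun k l => y (Sum.inl (k, l))).trace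
        + (∑ i, α i * y (Sum.inr (Sum.inl i))) + (∑ j, β j * y (Sum.inr (Sum.inr j))) := by
  simp only [PiLp.inner_apply, RCLike.inner_apply, starRingEnd_apply, star_trivial]
  rw [Fintype.sum_sum_type, Fintype.sum_sum_type]
  have h1 : ∑ kl : Fin d × Fin d, farkasB (d := d) α β (Sum.inl kl) * y (Sum.inl kl)
      = (Matrix.of fun k l => y (Sum.inl (k, l))).trace := by
    rw [Fintype.sum_prod_type]
    simp [farkasB, Matrix.trace, Matrix.diag, ite_mul, Finset.sum_ite_eq]
  have h2 : ∑ i, farkasB (d := d) α β (Sum.inr (Sum.inl i)) * y (Sum.inr (Sum.inl i))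
      = ∑ i, α i * y (Sum.inr (Sum.inl i)) := by simp [farkasB]
  have h3 : ∑ j, farkasB (d := d) α β (Sum.inr (Sum.inr j)) * y (Sum.inr (Sum.inr j))
      = ∑ j, β j * y (Sum.inr (Sum.inr j)) := by simp [farkasB]
  simp only [mul_comm (WithLp.ofLp y _)]
  rw [h1, h2, h3, add_assoc]

lemma farkas_entry (Φ : Matrix (Fin N) (Fin d) ℝ) (Ψ : Matrix (Fin M) (Fin d) ℝ)
    (A : Matrix (Fin N) (Fin M) ℝ) (k l : Fin d) :
    (Φᵀ * A * Ψ) k l = ∑ p : Fin N × Fin M, A p.1 p.2 * (Φ p.1 k * Ψ p.2 l) := by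
  rw [Matrix.mul_apply, Fintype.sum_prod_type, Finset.sum_comm]
  refine Finset.sum_congr rfl fun j _ => ?_
  rw [Matrix.mul_apply, Finset.sum_mul]
  refine Finset.sum_congr rfl fun i _ => ?_
  rw [Matrix.transpose_apply]; ring

lemma farkas_row (t : Fin N × Fin M → ℝ) (i : Fin N) :
    ∑ p : Fin N × Fin M, (if i = p.1 then t p else 0) = ∑ j, t (i, j) := by
  rw [Fintype.sum_prod_type, Finset.sum_comm]
  simp [Finset.sum_ite_eq]

lemma farkas_col (t : Fin N × Fin M → ℝ) (j : Fin M) :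
    ∑ p : Fin N × Fin M, (if j = p.2 then t p else 0) = ∑ i, t (i, j) := by
  rw [Fintype.sum_prod_type]
  simp [Finset.sum_ite_eq]

/-- Farkas-type characterization of the existence of a "doubly stochastic" matrix
`A ∈ DS(α,β)` with `Φᵀ A Ψ = I`, for analysis matrices `Φ`, `Ψ` of two frames and
positive weights `α`, `β` summing to one. -/
theorem stmt7 {d N M : ℕ}
    (Φ : Matrix (Fin N) (Fin d) ℝ) (Ψ : Matrix (Fin M) (Fin d) ℝ)
    (hΦ : Submodule.span ℝ (Set.range fun i => Φ i) = ⊤)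
    (hΨ : Submodule.span ℝ (Set.range fun j => Ψ j) = ⊤)
    (α : Fin N → ℝ) (β : Fin M → ℝ)
    (hα : ∀ i, 0 < α i) (hβ : ∀ j, 0 < β j)
    (hαs : ∑ i, α i = 1) (hβs : ∑ j, β j = 1) :
    (∃ A : Matrix (Fin N) (Fin M) ℝ,
      (∀ i j, 0 ≤ A i j) ∧ (∀ i, ∑ j, A i j = α i) ∧ (∀ j, ∑ i, A i j = β j) ∧
      Φᵀ * A * Ψ = 1) ↔
    ¬ ∃ (B : Matrix (Fin d) (Fin d) ℝ) (u : Fin N → ℝ) (v : Fin M → ℝ),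
      (∀ i j, 0 ≤ Φ i ⬝ᵥ B.mulVec (Ψ j) + u i + v j) ∧
      B.trace + u ⬝ᵥ α + v ⬝ᵥ β < 0 := by
  classical
  have hkey := farkas_lemma (farkasW Φ Ψ) (farkasB (d := d) α β)
  -- first equivalence: existence of A ↔ existence of nonnegative t
  have hA : (∃ A : Matrix (Fin N) (Fin M) ℝ,
      (∀ i j, 0 ≤ A i j) ∧ (∀ i, ∑ j, A i j = α i) ∧ (∀ j, ∑ i, A i j = β j) ∧
      Φᵀ * A * Ψ = 1) ↔
      (∃ t : Fin N × Fin M → ℝ, (∀ p, 0 ≤ t p) ∧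
        ∑ p, t p • farkasW Φ Ψ p = farkasB (d := d) α β) := by
    constructor
    · rintro ⟨A, hA0, hrow, hcol, hprod⟩
      refine ⟨fun p => A p.1 p.2, fun p => hA0 _ _, PiLp.ext fun k => ?_⟩
      rw [WithLp.ofLp_sum, Finset.sum_apply]
      have hsmul : ∀ p, (((fun p => A p.1 p.2) p) • farkasW Φ Ψ p) k
          = A p.1 p.2 * farkasW Φ Ψ p k := fun p => rfl
      simp only [hsmul]
      rcases k with kl | i | j
      · have := congrFun (congrFun hprod kl.1) kl.2
        rw [farkas_entry] at this
        simpa [farkasW, farkasB, Matrix.one_apply] using this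
      · simpa [farkasW, farkasB, mul_ite, mul_one, mul_zero, farkas_row (fun p => A p.1 p.2) i] using hrow i
      · simpa [farkasW, farkasB, mul_ite, mul_one, mul_zero, farkas_col (fun p => A p.1 p.2) j] using hcol j
    · rintro ⟨t, ht, hsum⟩
      refine ⟨Matrix.of fun i j => t (i, j), fun i j => ht _, ?_, ?_, ?_⟩
      · intro i
        have := congrFun (congrArg WithLp.ofLp hsum) (Sum.inr (Sum.inl i))
        rw [WithLp.ofLp_sum, Finset.sum_apply] at this
        simpa [farkasW, farkasB, mul_ite, mul_one, mul_zero, farkas_row t i] using this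
      · intro j
        have := congrFun (congrArg WithLp.ofLp hsum) (Sum.inr (Sum.inr j))
        rw [WithLp.ofLp_sum, Finset.sum_apply] at this
        simpa [farkasW, farkasB, mul_ite, mul_one, mul_zero, farkas_col t j] using this
      · ext k l
        have := congrFun (congrArg WithLp.ofLp hsum) (Sum.inl (k, l))
        rw [WithLp.ofLp_sum, Finset.sum_apply] at this
        rw [farkas_entry, Matrix.one_apply]
        simpa [farkasW, farkasB] using this
  rw [hA, hkey]
  -- second equivalence: the dual conditions
  constructor
  · rintro hfor ⟨B, u, v, hcert, hlt⟩
    set y : EuclideanSpace ℝ ((Fin d × Fin d) ⊕ (Fin N ⊕ Fin M)) :=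
      WithLp.toLp 2 (Sum.elim (fun kl : Fin d × Fin d => B kl.1 kl.2) (Sum.elim u v)) with hy
    have h1 : ∀ p : Fin N × Fin M, 0 ≤ ⟪farkasW Φ Ψ p, y⟫_ℝ := by
      intro p
      rw [farkasW_inner]
      have hB : (Matrix.of fun k l => y (Sum.inl (k, l))) = B := by ext k l; simp [hy]
      rw [hB]
      exact hcert p.1 p.2
    have h2 := hfor y h1
    rw [farkasB_inner] at h2
    have hB : (Matrix.of fun k l => y (Sum.inl (k, l))) = B := by ext k l; simp [hy]
    rw [hB] at h2
    have hu : (∑ i, α i * y (Sum.inr (Sum.inl i))) = u ⬝ᵥ α := by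
      simp [hy, dotProduct, mul_comm]
    have hv : (∑ j, β j * y (Sum.inr (Sum.inr j))) = v ⬝ᵥ β := by
      simp [hy, dotProduct, mul_comm]
    rw [hu, hv] at h2
    linarith
  · intro hno y hy
    by_contra hneg
    push_neg at hneg
    apply hno
    refine ⟨Matrix.of fun k l => y (Sum.inl (k, l)), fun i => y (Sum.inr (Sum.inl i)),
      fun j => y (Sum.inr (Sum.inr j)), fun i j => ?_, ?_⟩
    · have := hy (i, j)
      rwa [farkasW_inner] at this
    · rw [farkasB_inner] at hneg
      have hu : (fun i => y (Sum.inr (Sum.inl i))) ⬝ᵥ α = ∑ i, α i * y (Sum.inr (Sum.inl i)) := by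
        simp [dotProduct, mul_comm]
      have hv : (fun j => y (Sum.inr (Sum.inr j))) ⬝ᵥ β = ∑ j, β j * y (Sum.inr (Sum.inr j)) := by
        simp [dotProduct, mul_comm]
      rw [hu, hv]
      linarith
end

section
/- Let {φᵢ}ᵢ₌₁^N and {ψᵢ}ᵢ₌₁^N be frames for ℝ^d with analysis matrices Φ, Ψ (rows φᵢ^T, ψᵢ^T). If Ψ†Φ has no negative eigenvalues and the set {(φᵢ, ψᵢ)}ᵢ₌₁^N is cyclically monotone, then for every t ∈ [0,1] the vectors {(1−t)φᵢ + tψᵢ}ᵢ₌₁^N span ℝ^d, i.e., the matrix (1−t)Φ + tΨ has rank d. -/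
open Matrix

/-- If the rows of `A` span `ℝ^d`, then `A *ᵥ v = 0` implies `v = 0`. -/
lemma aux_span_mulVec_eq_zero {d N : ℕ} (A : Matrix (Fin N) (Fin d) ℝ)
    (h : Submodule.span ℝ (Set.range fun i => A i) = ⊤)
    (v : Fin d → ℝ) (hv : A.mulVec v = 0) : v = 0 := by
  have hrow : ∀ i, A i ⬝ᵥ v = 0 := fun i => congrFun hv i
  have hvmem : v ∈ Submodule.span ℝ (Set.range fun i => A i) := by
    rw [h]; trivial
  rw [Submodule.mem_span_range_iff_exists_fun] at hvmem
  obtain ⟨c, hc⟩ := hvmem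
  have key : (∑ i, c i • A i) ⬝ᵥ v = 0 := by
    simp only [dotProduct, Finset.sum_apply, Pi.smul_apply, smul_eq_mul, Finset.sum_mul,
      mul_assoc]
    rw [Finset.sum_comm]
    refine Finset.sum_eq_zero fun i _ => ?_
    rw [← Finset.mul_sum]
    have hri := hrow i
    simp only [dotProduct] at hri
    rw [hri, mul_zero]
  rw [hc] at key
  exact dotProduct_self_eq_zero.mp key

/-- If `Ψ†Φ` has no negative real eigenvalues and `{(φᵢ, ψᵢ)}` is cyclically monotone,
then all convex combinations `(1−t)Φ + tΨ`, `t ∈ [0,1]`, have rank `d`; i.e., every measure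
on the geodesic between the canonical probabilistic frames `μ_Φ` and `μ_Ψ` is a
probabilistic frame. -/
theorem stmt11 {d N : ℕ}
    (Φ Ψ : Matrix (Fin N) (Fin d) ℝ)
    (hΦ : Submodule.span ℝ (Set.range fun i => Φ i) = ⊤)
    (hΨ : Submodule.span ℝ (Set.range fun i => Ψ i) = ⊤)
    (heig : ¬ ∃ (c : ℝ) (v : Fin d → ℂ), c < 0 ∧ v ≠ 0 ∧
      ((((Ψᵀ * Ψ)⁻¹ * Ψᵀ * Φ).map (algebraMap ℝ ℂ)).mulVec v = (c : ℂ) • v))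
    (hmono : ∀ σ : Equiv.Perm (Fin N), ∑ i, Φ i ⬝ᵥ Ψ (σ i) ≤ ∑ i, Φ i ⬝ᵥ Ψ i)
    (t : ℝ) (ht0 : 0 ≤ t) (ht1 : t ≤ 1) :
    ((1 - t) • Φ + t • Ψ).rank = d := by
  -- It suffices to show that `mulVec` of the matrix is injective.
  have hinj : Function.Injective ((1 - t) • Φ + t • Ψ).mulVecLin := by
    rw [← LinearMap.ker_eq_bot, LinearMap.ker_eq_bot']
    intro v hv
    simp only [mulVecLin_apply] at hv
    rcases eq_or_lt_of_le ht0 with h0 | h0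
    · -- t = 0
      apply aux_span_mulVec_eq_zero Φ hΦ
      rw [← h0] at hv
      simpa using hv
    rcases eq_or_lt_of_le ht1 with h1 | h1
    · -- t = 1
      apply aux_span_mulVec_eq_zero Ψ hΨ
      rw [h1] at hv
      simpa using hv
    -- 0 < t < 1
    by_contra hvne
    -- ΨᵀΨ is invertible
    have hGinj : Function.Injective (Ψᵀ * Ψ).mulVec := by
      intro a b hab
      have : (Ψᵀ * Ψ).mulVec (a - b) = 0 := by
        rw [Matrix.mulVec_sub, hab, sub_self]
      have hker : a - b ∈ LinearMap.ker (Ψᵀ * Ψ).mulVecLin := this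
      rw [ker_mulVecLin_transpose_mul_self] at hker
      have : a - b = 0 := aux_span_mulVec_eq_zero Ψ hΨ _ hker
      exact sub_eq_zero.mp this
    have hGunit : IsUnit (Ψᵀ * Ψ) := mulVec_injective_iff_isUnit.mp hGinj
    have hGdet : IsUnit (Ψᵀ * Ψ).det := (isUnit_iff_isUnit_det _).mp hGunit
    -- Multiply the kernel equation by Ψᵀ on the left
    have h2 : (1 - t) • (Ψᵀ * Φ).mulVec v + t • (Ψᵀ * Ψ).mulVec v = 0 := by
      have := congrArg (Ψᵀ.mulVec) hv
      rwa [Matrix.mulVec_zero, Matrix.add_mulVec, Matrix.smul_mulVec,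
        Matrix.smul_mulVec, Matrix.mulVec_add, Matrix.mulVec_smul,
        Matrix.mulVec_smul, Matrix.mulVec_mulVec, Matrix.mulVec_mulVec] at this
    -- Apply (ΨᵀΨ)⁻¹
    have h3 : (1 - t) • ((Ψᵀ * Ψ)⁻¹ * Ψᵀ * Φ).mulVec v = (-t) • v := by
      have heq := eq_neg_of_add_eq_zero_left h2
      calc (1 - t) • ((Ψᵀ * Ψ)⁻¹ * Ψᵀ * Φ).mulVec v
          = (Ψᵀ * Ψ)⁻¹.mulVec ((1 - t) • (Ψᵀ * Φ).mulVec v) := by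
            rw [Matrix.mulVec_smul, Matrix.mulVec_mulVec, Matrix.mul_assoc]
        _ = (Ψᵀ * Ψ)⁻¹.mulVec (-(t • (Ψᵀ * Ψ).mulVec v)) := by rw [heq]
        _ = (-t) • v := by
            rw [Matrix.mulVec_neg, Matrix.mulVec_smul, Matrix.mulVec_mulVec,
              Matrix.nonsing_inv_mul _ hGdet, Matrix.one_mulVec, neg_smul]
    -- Divide by (1 - t)
    have h1t : (0:ℝ) < 1 - t := by linarith
    set A := (Ψᵀ * Ψ)⁻¹ * Ψᵀ * Φ with hA
    have h4 : A.mulVec v = (-t / (1 - t)) • v := by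
      have := congrArg (fun w => (1 - t)⁻¹ • w) h3
      simp only [smul_smul] at this
      rw [inv_mul_cancel₀ h1t.ne', one_smul] at this
      rw [this, div_eq_inv_mul, mul_comm]
    -- Complexify to contradict heig
    apply heig
    refine ⟨-t / (1 - t), (fun i => algebraMap ℝ ℂ (v i)), div_neg_of_neg_of_pos (by linarith) h1t, ?_, ?_⟩
    · intro hz
      apply hvne
      funext i
      have := congrFun hz i
      simpa using this
    · funext i
      have hm := RingHom.map_mulVec (algebraMap ℝ ℂ) A v i
      rw [show (fun i => algebraMap ℝ ℂ (v i)) = (algebraMap ℝ ℂ) ∘ v from rfl, ← hm, h4]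
      simp [Complex.coe_algebraMap]
  rw [Matrix.rank, LinearMap.finrank_range_of_inj hinj,
    Module.finrank_fintype_fun_eq_card, Fintype.card_fin]
end

section
/- If {φᵢ}ᵢ₌₁^N is the canonical dual frame to a frame {ψᵢ}ᵢ₌₁^N for ℝ^d, i.e., φᵢ = S^{-1}ψᵢ with S = Σᵢ ψᵢψᵢ^T, then the set {(φᵢ, ψᵢ)}ᵢ₌₁^N is cyclically monotone: for every permutation σ of {1,…,N}, Σᵢ ⟨φᵢ, ψᵢ − ψ_{σ(i)}⟩ ≥ 0. -/
open Matrix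

/-- The canonical dual frame pairs cyclically monotonically with the frame: if
`φᵢ = S⁻¹ψᵢ` with `S = Σᵢ ψᵢψᵢᵀ = ΨᵀΨ`, then for every permutation `σ`,
`Σᵢ ⟨φᵢ, ψᵢ − ψ_{σ(i)}⟩ ≥ 0`. -/
theorem stmt12 {d N : ℕ}
    (Ψ : Matrix (Fin N) (Fin d) ℝ)
    (hΨ : Submodule.span ℝ (Set.range fun i => Ψ i) = ⊤)
    (φ : Fin N → (Fin d → ℝ))
    (hφ : ∀ i, φ i = (Ψᵀ * Ψ)⁻¹.mulVec (Ψ i))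
    (σ : Equiv.Perm (Fin N)) :
    0 ≤ ∑ i, φ i ⬝ᵥ (Ψ i - Ψ (σ i)) := by
  set S := Ψᵀ * Ψ with hSdef
  -- S is positive definite
  have hSherm : S.IsHermitian := by
    have := (Matrix.posSemidef_conjTranspose_mul_self Ψ).1
    simpa using this
  have hmulVec : ∀ x : Fin d → ℝ, Ψ *ᵥ x = 0 → x = 0 := by
    intro x hx
    have hall : ∀ v ∈ Submodule.span ℝ (Set.range fun i => Ψ i), v ⬝ᵥ x = 0 := by
      intro v hv
      induction hv using Submodule.span_induction with
      | mem v hv =>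
        obtain ⟨i, rfl⟩ := hv
        have := congrFun hx i
        simpa [Matrix.mulVec, dotProduct] using this
      | zero => simp
      | add u v _ _ hu hv => simp [add_dotProduct, hu, hv]
      | smul a u _ hu => simp [smul_dotProduct, hu]
    have hxx : x ⬝ᵥ x = 0 := hall x (by rw [hΨ]; trivial)
    have := dotProduct_self_eq_zero.mp hxx
    exact this
  have hSpd : S.PosDef := by
    refine Matrix.PosDef.of_dotProduct_mulVec_pos hSherm fun x hx => ?_
    have key : x ⬝ᵥ S *ᵥ x = (Ψ *ᵥ x) ⬝ᵥ (Ψ *ᵥ x) := by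
      rw [hSdef, ← Matrix.mulVec_mulVec, Matrix.dotProduct_mulVec, Matrix.vecMul_transpose]
    have hne : Ψ *ᵥ x ≠ 0 := fun h => hx (hmulVec x h)
    have : 0 < (Ψ *ᵥ x) ⬝ᵥ star (Ψ *ᵥ x) :=
      Matrix.dotProduct_self_star_pos_iff.mpr hne
    simp only [star_trivial] at this
    simpa [key] using this
  have hSinv : (S⁻¹).PosDef := hSpd.inv
  have hpsd : ∀ w : Fin d → ℝ, 0 ≤ w ⬝ᵥ S⁻¹ *ᵥ w := by
    intro w
    have := hSinv.posSemidef.dotProduct_mulVec_nonneg w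
    simpa using this
  have hsym : (S⁻¹)ᵀ = S⁻¹ := by
    have := hSinv.isHermitian
    exact (Matrix.isHermitian_iff_isSymm.mp this).eq
  have hBsymm : ∀ x y : Fin d → ℝ, x ⬝ᵥ S⁻¹ *ᵥ y = y ⬝ᵥ S⁻¹ *ᵥ x := by
    intro x y
    rw [Matrix.dotProduct_mulVec, ← Matrix.mulVec_transpose, hsym, dotProduct_comm]
  have expand : ∀ i, (Ψ i - Ψ (σ i)) ⬝ᵥ S⁻¹ *ᵥ (Ψ i - Ψ (σ i))
      = Ψ i ⬝ᵥ S⁻¹ *ᵥ Ψ i + Ψ (σ i) ⬝ᵥ S⁻¹ *ᵥ Ψ (σ i)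
        - 2 * (Ψ i ⬝ᵥ S⁻¹ *ᵥ Ψ (σ i)) := by
    intro i
    rw [Matrix.mulVec_sub, sub_dotProduct, dotProduct_sub, dotProduct_sub,
      hBsymm (Ψ (σ i)) (Ψ i)]
    ring
  have hperm : ∑ i, Ψ (σ i) ⬝ᵥ S⁻¹ *ᵥ Ψ (σ i) = ∑ i, Ψ i ⬝ᵥ S⁻¹ *ᵥ Ψ i :=
    Equiv.sum_comp σ (fun i => Ψ i ⬝ᵥ S⁻¹ *ᵥ Ψ i)
  have key2 : ∑ i, (Ψ i - Ψ (σ i)) ⬝ᵥ S⁻¹ *ᵥ (Ψ i - Ψ (σ i))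
      = 2 * ∑ i, φ i ⬝ᵥ (Ψ i - Ψ (σ i)) := by
    have pt : ∀ i, φ i ⬝ᵥ (Ψ i - Ψ (σ i))
        = Ψ i ⬝ᵥ S⁻¹ *ᵥ Ψ i - Ψ i ⬝ᵥ S⁻¹ *ᵥ Ψ (σ i) := by
      intro i
      rw [hφ i, dotProduct_comm, sub_dotProduct, hBsymm (Ψ (σ i)) (Ψ i)]
    simp only [expand, pt, Finset.sum_sub_distrib, Finset.sum_add_distrib, ← Finset.mul_sum]
    rw [hperm]
    ring
  have hnn : 0 ≤ ∑ i, (Ψ i - Ψ (σ i)) ⬝ᵥ S⁻¹ *ᵥ (Ψ i - Ψ (σ i)) :=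
    Finset.sum_nonneg fun i _ => hpsd _
  linarith [key2 ▸ hnn, hnn, key2]
end

section
/- If {φᵢ}ᵢ₌₁^N is the canonical dual frame of a frame {ψᵢ}ᵢ₌₁^N for ℝ^d, with analysis matrices Φ and Ψ, then Ψ†Φ = (Ψ^TΨ)^{-1}, which is positive definite; consequently (1−t)Φ + tΨ has rank d for every t ∈ [0,1]. -/
open Matrix

lemma aux_smul_posDef {n : ℕ} {A : Matrix (Fin n) (Fin n) ℝ} {c : ℝ}
    (hc : 0 < c) (hA : A.PosDef) : (c • A).PosDef := by
  refine posDef_iff_dotProduct_mulVec.mpr ⟨?_, fun x hx => ?_⟩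
  · rw [IsHermitian, conjTranspose_smul, hA.1.eq, star_trivial]
  · rw [smul_mulVec, dotProduct_smul, smul_eq_mul]
    exact mul_pos hc ((posDef_iff_dotProduct_mulVec.mp hA).2 hx)

lemma aux_smul_posSemidef {n : ℕ} {A : Matrix (Fin n) (Fin n) ℝ} {c : ℝ}
    (hc : 0 ≤ c) (hA : A.PosSemidef) : (c • A).PosSemidef := by
  refine posSemidef_iff_dotProduct_mulVec.mpr ⟨?_, fun x => ?_⟩
  · rw [IsHermitian, conjTranspose_smul, hA.1.eq, star_trivial]
  · rw [smul_mulVec, dotProduct_smul, smul_eq_mul]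
    exact mul_nonneg hc ((posSemidef_iff_dotProduct_mulVec.mp hA).2 x)

/-- For the canonical dual pair `Φ = Ψ(ΨᵀΨ)⁻¹`, one has `Ψ†Φ = (ΨᵀΨ)⁻¹`, which is
positive definite; consequently `(1−t)Φ + tΨ` has rank `d` for every `t ∈ [0,1]`. -/
theorem stmt14 {d N : ℕ}
    (Ψ : Matrix (Fin N) (Fin d) ℝ)
    (hΨ : Submodule.span ℝ (Set.range fun i => Ψ i) = ⊤)
    (Φ : Matrix (Fin N) (Fin d) ℝ)
    (hΦ : Φ = Ψ * (Ψᵀ * Ψ)⁻¹) :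
    ((Ψᵀ * Ψ)⁻¹ * Ψᵀ) * Φ = (Ψᵀ * Ψ)⁻¹ ∧
    ((Ψᵀ * Ψ)⁻¹).PosDef ∧
    ∀ t : ℝ, 0 ≤ t → t ≤ 1 → ((1 - t) • Φ + t • Ψ).rank = d := by
  -- rank of Ψ is d
  have hrank : Ψ.rank = d := by
    rw [Matrix.rank_eq_finrank_span_row, show Ψ.row = fun i => Ψ i from rfl, hΨ, finrank_top]
    simp
  -- Ψ.mulVecLin is injective
  have hinj : Function.Injective Ψ.mulVecLin := by
    rw [← LinearMap.ker_eq_bot]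
    have h1 := LinearMap.finrank_range_add_finrank_ker Ψ.mulVecLin
    have h2 : Module.finrank ℝ (LinearMap.range Ψ.mulVecLin) = d := hrank
    rw [h2] at h1
    simp only [Module.finrank_fin_fun] at h1
    have : Module.finrank ℝ (LinearMap.ker Ψ.mulVecLin) = 0 := by omega
    exact Submodule.finrank_eq_zero.mp this
  -- S = ΨᵀΨ is positive definite
  have hS : (Ψᵀ * Ψ).PosDef := by
    refine posDef_iff_dotProduct_mulVec.mpr ⟨by simpa [conjTranspose_eq_transpose_of_trivial] using isHermitian_conjTranspose_mul_self Ψ, fun x hx => ?_⟩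
    have hne : Ψ *ᵥ x ≠ 0 := by
      intro h
      apply hx
      have := hinj (a₁ := x) (a₂ := 0) (by simpa [Matrix.mulVecLin_apply] using h)
      simpa using this
    rw [star_trivial, ← Matrix.mulVec_mulVec, Matrix.dotProduct_mulVec,
      Matrix.vecMul_transpose]
    have := dotProduct_star_self_pos_iff (v := Ψ *ᵥ x) (R := ℝ) |>.mpr hne
    simpa using this
  have hSinv : ((Ψᵀ * Ψ)⁻¹).PosDef := hS.inv
  have hdet : IsUnit (Ψᵀ * Ψ).det := hS.det_pos.ne'.isUnit
  refine ⟨?_, hSinv, ?_⟩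
  · rw [hΦ, Matrix.mul_assoc, ← Matrix.mul_assoc Ψᵀ,
      Matrix.mul_nonsing_inv _ hdet, Matrix.mul_one]
  · intro t ht0 ht1
    have key : (1 - t) • Φ + t • Ψ = Ψ * ((1 - t) • (Ψᵀ * Ψ)⁻¹ + t • 1) := by
      rw [Matrix.mul_add, Matrix.mul_smul, Matrix.mul_smul, Matrix.mul_one, hΦ]
    rw [key]
    have hM : ((1 - t) • (Ψᵀ * Ψ)⁻¹ + t • (1 : Matrix (Fin d) (Fin d) ℝ)).PosDef := by
      rcases lt_or_eq_of_le ht1 with h | h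
      · exact (aux_smul_posDef (by linarith) hSinv).add_posSemidef
          (aux_smul_posSemidef ht0 Matrix.PosSemidef.one)
      · exact Matrix.PosDef.posSemidef_add
          (aux_smul_posSemidef (by linarith) hSinv.posSemidef)
          (aux_smul_posDef (by linarith) Matrix.PosDef.one)
    rw [Matrix.rank_mul_eq_left_of_isUnit_det _ _ hM.det_pos.ne'.isUnit]
    exact hrank
end

section
/- Let {ψᵢ}ᵢ₌₁^N be a dual frame to a frame {φᵢ}ᵢ₌₁^N of unit vectors in ℝ^d with frame operator S_Φ. Set zᵢ = ψᵢ − S_Φ^{-1}φᵢ and a = min_{i≠j} ⟨φᵢ, S_Φ^{-1}(φᵢ − φⱼ)⟩. If max_j ‖zⱼ‖ ≤ a/N, then for every permutation σ, Σᵢ ⟨φᵢ, ψ_{σ(i)}⟩ ≤ Σᵢ ⟨φᵢ, ψᵢ⟩; i.e., the identity permutation is optimal for the discrete quadratic transport problem between the two uniformly weighted frames. -/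
open scoped RealInnerProductSpace

/-- If a dual frame `{ψᵢ}` of a unit-norm frame `{φᵢ}` is close enough to the canonical
dual (each `zᵢ = ψᵢ − S_Φ⁻¹φᵢ` has norm at most `a/N`, where
`a = min_{i≠j}⟨φᵢ, S_Φ⁻¹(φᵢ−φⱼ)⟩`), then the identity permutation is optimal for the
discrete quadratic transport problem: `Σᵢ ⟨φᵢ, ψ_{σ(i)}⟩ ≤ Σᵢ ⟨φᵢ, ψᵢ⟩` for all `σ`. -/
theorem stmt16 {d N : ℕ}
    (φ ψ : Fin N → EuclideanSpace ℝ (Fin d))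
    (hunit : ∀ i, ‖φ i‖ = 1)
    (hspan : Submodule.span ℝ (Set.range φ) = ⊤)
    (hdualframe : ∀ x : EuclideanSpace ℝ (Fin d), ∑ i, ⟪x, φ i⟫ • ψ i = x)
    (S : Matrix (Fin d) (Fin d) ℝ) (hS : S = fun i j => ∑ k, φ k i * φ k j)
    (z : Fin N → EuclideanSpace ℝ (Fin d))
    (hz : ∀ i, z i = ψ i - Matrix.toEuclideanLin S⁻¹ (φ i))
    (a : ℝ)
    (ha : IsLeast {r : ℝ | ∃ i j : Fin N, i ≠ j ∧
      r = ⟪φ i, Matrix.toEuclideanLin S⁻¹ (φ i - φ j)⟫} a)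
    (hsmall : ∀ j, ‖z j‖ ≤ a / N) :
    ∀ σ : Equiv.Perm (Fin N), ∑ i, ⟪φ i, ψ (σ i)⟫ ≤ ∑ i, ⟪φ i, ψ i⟫ := by
  obtain ⟨i0, j0, hij0, _⟩ := ha.1
  have hN2 : 2 ≤ N := by
    have : Nontrivial (Fin N) := ⟨⟨i0, j0, hij0⟩⟩
    have h1 := Fintype.one_lt_card (α := Fin N)
    simp only [Fintype.card_fin] at h1
    omega
  have hNpos : (0:ℝ) < N := by
    have : 0 < N := by omega
    exact_mod_cast this
  have hN2' : (2:ℝ) ≤ N := by exact_mod_cast hN2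
  have haN : 0 ≤ a / N := le_trans (norm_nonneg (z i0)) (hsmall i0)
  have hdiv : a / N + a / N ≤ a := by
    have hcancel : a / N * N = a := div_mul_cancel₀ a hNpos.ne'
    nlinarith [haN, hN2']
  intro σ
  apply Finset.sum_le_sum
  intro i _
  by_cases h : σ i = i
  · rw [h]
  · set T := Matrix.toEuclideanLin S⁻¹ with hT
    have hkey : a ≤ ⟪φ i, T (φ i - φ (σ i))⟫ :=
      ha.2 ⟨i, σ i, fun e => h e.symm, rfl⟩
    have hψ : ∀ j, ψ j = z j + T (φ j) := by
      intro j
      have := hz j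
      rw [this]; abel
    have e3 : ⟪φ i, T (φ i - φ (σ i))⟫ = ⟪φ i, T (φ i)⟫ - ⟪φ i, T (φ (σ i))⟫ := by
      rw [map_sub, inner_sub_right]
    have bnd : ∀ j, |⟪φ i, z j⟫| ≤ a / N := by
      intro j
      calc |⟪φ i, z j⟫| ≤ ‖φ i‖ * ‖z j‖ := abs_real_inner_le_norm _ _
        _ = ‖z j‖ := by rw [hunit i, one_mul]
        _ ≤ a / N := hsmall j
    have b1 := abs_le.mp (bnd i)
    have b2 := abs_le.mp (bnd (σ i))
    rw [hψ i, hψ (σ i), inner_add_right, inner_add_right]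
    linarith [b1.1, b2.2, hkey, e3]
end
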